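/- Let N ≥ 1, let x_1, …, x_{N+1} ∈ ℝ^N be affinely independent, and fix α ≥ 0. Suppose y and y* both lie in the open convex hull co{x_1,…,x_{N+1}}, and A, A* > 0 satisfy A e^{−α‖x_i − y‖}/‖x_i − y‖² = A* e^{−α‖x_i − y*‖}/‖x_i − y*‖² for all i ∈ {1,…,N+1}. Then y = y* and A = A*. -/

import Mathlib

open Real

/-- Monotonicity: with a larger (or equal) amplitude, equal measurements force a
larger (or equal) distance. -/
lemma meas_dist_le {A Astar α d dstar : ℝ} (hα : 0 ≤ α) (hA : 0 < A)
    (hAstar : 0 < Astar) (hAle : A ≤ Astar) (hds : 0 ≤ dstar)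
    (heq : A * Real.exp (-α * d) / d ^ 2 = Astar * Real.exp (-α * dstar) / dstar ^ 2) :
    d ≤ dstar := by
  by_contra hlt
  push_neg at hlt
  have hd : 0 < d := lt_of_le_of_lt hds hlt
  rcases eq_or_lt_of_le hds with h0 | h0
  · -- dstar = 0 : RHS is 0 but LHS > 0
    rw [← h0] at heq
    simp at heq
    rcases heq with h1 | h1 <;> linarith
  · have hexp : Real.exp (-α * d) ≤ Real.exp (-α * dstar) := by
      apply Real.exp_le_exp.2
      nlinarith
    have h1 : A * Real.exp (-α * d) / d ^ 2 < A * Real.exp (-α * d) / dstar ^ 2 := by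
      apply div_lt_div_of_pos_left (by positivity) (by positivity)
      nlinarith
    have h2 : A * Real.exp (-α * d) / dstar ^ 2 ≤ Astar * Real.exp (-α * dstar) / dstar ^ 2 := by
      apply div_le_div_of_nonneg_right _ (by positivity)
      · nlinarith [Real.exp_pos (-α * d), Real.exp_pos (-α * dstar)]
    linarith [heq]

/-- If a point of the convex hull of the sensors is at least as far from every
sensor as another point is, the two points coincide. -/
lemma eq_of_closer {N : ℕ} (x : Fin (N + 1) → EuclideanSpace ℝ (Fin N))
    (y ystar : EuclideanSpace ℝ (Fin N))
    (hy : y ∈ convexHull ℝ (Set.range x))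
    (hle : ∀ i, ‖x i - ystar‖ ≤ ‖x i - y‖) : y = ystar := by
  set S : Set (EuclideanSpace ℝ (Fin N)) :=
    {z | 2 * (inner ℝ z (y - ystar) : ℝ) ≤ ‖y‖ ^ 2 - ‖ystar‖ ^ 2} with hS
  have hlin : IsLinearMap ℝ (fun z : EuclideanSpace ℝ (Fin N) =>
      2 * (inner ℝ z (y - ystar) : ℝ)) := by
    constructor
    · intro a b; rw [inner_add_left]; ring
    · intro c a; rw [real_inner_smul_left]; simp [smul_eq_mul]; ring
  have hconv : Convex ℝ S := convex_halfSpace_le hlin _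
  have hsub : Set.range x ⊆ S := by
    rintro _ ⟨i, rfl⟩
    have h1 : ‖x i - ystar‖ ^ 2 ≤ ‖x i - y‖ ^ 2 := by
      have := hle i
      nlinarith [norm_nonneg (x i - ystar), norm_nonneg (x i - y)]
    have e1 : ‖x i - y‖ ^ 2 = ‖x i‖ ^ 2 - 2 * (inner ℝ (x i) y : ℝ) + ‖y‖ ^ 2 := by
      rw [norm_sub_sq_real]
    have e2 : ‖x i - ystar‖ ^ 2 = ‖x i‖ ^ 2 - 2 * (inner ℝ (x i) ystar : ℝ) + ‖ystar‖ ^ 2 := by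
      rw [norm_sub_sq_real]
    have e3 : (inner ℝ (x i) (y - ystar) : ℝ) = (inner ℝ (x i) y : ℝ) - (inner ℝ (x i) ystar : ℝ) :=
      inner_sub_right _ _ _
    simp only [hS, Set.mem_setOf_eq]
    linarith
  have hyS : y ∈ S := convexHull_min hsub hconv hy
  simp only [hS, Set.mem_setOf_eq] at hyS
  have e3 : (inner ℝ y (y - ystar) : ℝ) = (inner ℝ y y : ℝ) - (inner ℝ y ystar : ℝ) :=
    inner_sub_right _ _ _
  have e4 : ‖y - ystar‖ ^ 2 = ‖y‖ ^ 2 - 2 * (inner ℝ y ystar : ℝ) + ‖ystar‖ ^ 2 :=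
    norm_sub_sq_real _ _
  have e5 : (inner ℝ y y : ℝ) = ‖y‖ ^ 2 := real_inner_self_eq_norm_sq y
  have h0 : ‖y - ystar‖ ^ 2 ≤ 0 := by linarith
  have : ‖y - ystar‖ = 0 := by nlinarith [norm_nonneg (y - ystar)]
  have := norm_eq_zero.mp this
  exact sub_eq_zero.mp this

/-- Identifiability (uniqueness core of Theorem 3): if two intensity/location pairs
`(A, y)` and `(A*, y*)`, both with location in the open convex hull (interior of the
convex hull) of `N + 1` affinely independent sensors in `ℝ^N`, produce identical
noise-free measurements `A e^{-α‖x i - y‖}/‖x i - y‖² = A* e^{-α‖x i - y*‖}/‖x i - y*‖²`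
at every sensor, then `y = y*` and `A = A*`. -/
theorem identifiability_in_open_hull {N : ℕ} (hN : 1 ≤ N)
    (x : Fin (N + 1) → EuclideanSpace ℝ (Fin N))
    (hx : AffineIndependent ℝ x)
    (α : ℝ) (hα : 0 ≤ α)
    (y ystar : EuclideanSpace ℝ (Fin N))
    (hy : y ∈ interior (convexHull ℝ (Set.range x)))
    (hystar : ystar ∈ interior (convexHull ℝ (Set.range x)))
    (A Astar : ℝ) (hA : 0 < A) (hAstar : 0 < Astar)
    (h : ∀ i, A * exp (-α * ‖x i - y‖) / ‖x i - y‖ ^ 2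
            = Astar * exp (-α * ‖x i - ystar‖) / ‖x i - ystar‖ ^ 2) :
    y = ystar ∧ A = Astar := by
  have hy' : y ∈ convexHull ℝ (Set.range x) := interior_subset hy
  have hystar' : ystar ∈ convexHull ℝ (Set.range x) := interior_subset hystar
  have hyy : y = ystar := by
    rcases le_total A Astar with hle | hle
    · -- A ≤ Astar : distances to ystar are larger, so ystar = y
      have key : ∀ i, ‖x i - y‖ ≤ ‖x i - ystar‖ := fun i =>
        meas_dist_le hα hA hAstar hle (norm_nonneg _) (h i)
      exact (eq_of_closer x ystar y hystar' key).symm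
    · have key : ∀ i, ‖x i - ystar‖ ≤ ‖x i - y‖ := fun i =>
        meas_dist_le hα hAstar hA hle (norm_nonneg _) (h i).symm
      exact eq_of_closer x y ystar hy' key
  refine ⟨hyy, ?_⟩
  -- find a sensor different from y
  have hinj : Function.Injective x := hx.injective
  have hne : x 0 ≠ y ∨ x 1 ≠ y := by
    by_contra hc
    push_neg at hc
    have : x 0 = x 1 := hc.1.trans hc.2.symm
    have h01 : (0 : Fin (N + 1)) ≠ 1 := by
      intro hh
      have hv := congrArg Fin.val hh
      simp [Fin.val_zero, Fin.val_one'] at hv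
      omega
    exact h01 (hinj ‹x 0 = x 1›)
  obtain ⟨i, hi⟩ : ∃ i, x i ≠ y := by
    rcases hne with h0 | h1
    · exact ⟨0, h0⟩
    · exact ⟨1, h1⟩
  have hd : ‖x i - y‖ ≠ 0 := by
    simp [sub_eq_zero, hi]
  have := h i
  rw [← hyy] at this
  have hpos : (0 : ℝ) < Real.exp (-α * ‖x i - y‖) / ‖x i - y‖ ^ 2 :=
    div_pos (Real.exp_pos _) (by positivity)
  have heq : A * (Real.exp (-α * ‖x i - y‖) / ‖x i - y‖ ^ 2)
      = Astar * (Real.exp (-α * ‖x i - y‖) / ‖x i - y‖ ^ 2) := by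
    field_simp at this ⊢
    linarith
  exact mul_right_cancel₀ (ne_of_gt hpos) heq
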